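/- A restart sequence together with the mean determines the distribution uniquely: if u and v are two probability mass functions on ℕ with finite means μ_u = ∑'_{n} n·u(n) and μ_v = ∑'_{n} n·v(n), if μ_u = μ_v, and if their restart sequences agree (S_u(n) = S_v(n) for all n ≥ 0), then u(n) = v(n) for all n. -/
import Mathlib


theorem restart_sequence_and_mean_determine_distribution
    (u v : ℕ → ℝ)
    (hu0 : ∀ n, 0 ≤ u n) (hu1 : ∑' n, u n = 1)
    (hv0 : ∀ n, 0 ≤ v n) (hv1 : ∑' n, v n = 1)
    (humean : Summable (fun n : ℕ => (n : ℝ) * u n))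
    (hvmean : Summable (fun n : ℕ => (n : ℝ) * v n))
    (μu μv : ℝ)
    (hμu : μu = ∑' n : ℕ, (n : ℝ) * u n) (hμv : μv = ∑' n : ℕ, (n : ℝ) * v n)
    (hμ : μu = μv)
    (hSS : ∀ n, ∑ k ∈ Finset.range (n + 1),
        (1 - (∑ j ∈ Finset.range (k + 1), u j) - u k * μu) =
      ∑ k ∈ Finset.range (n + 1),
        (1 - (∑ j ∈ Finset.range (k + 1), v j) - v k * μv)) :
    ∀ n, u n = v n := by
  have hμpos : 0 ≤ μu := by
    rw [hμu]
    exact tsum_nonneg fun n => mul_nonneg (Nat.cast_nonneg n) (hu0 n)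
  subst hμ
  -- pointwise equation
  have key : ∀ n, (∑ j ∈ Finset.range (n + 1), u j) + u n * μu =
      (∑ j ∈ Finset.range (n + 1), v j) + v n * μu := by
    intro n
    cases n with
    | zero =>
      have h := hSS 0
      simp only [Finset.sum_range_one, zero_add] at h ⊢
      linarith
    | succ m =>
      have h : (∑ k ∈ Finset.range (m + 1 + 1),
            (1 - (∑ j ∈ Finset.range (k + 1), u j) - u k * μu)) -
          (∑ k ∈ Finset.range (m + 1),
            (1 - (∑ j ∈ Finset.range (k + 1), u j) - u k * μu)) =
          (∑ k ∈ Finset.range (m + 1 + 1),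
            (1 - (∑ j ∈ Finset.range (k + 1), v j) - v k * μu)) -
          (∑ k ∈ Finset.range (m + 1),
            (1 - (∑ j ∈ Finset.range (k + 1), v j) - v k * μu)) := by
        rw [hSS (m + 1), hSS m]
      simp only [Finset.sum_range_succ_sub_sum] at h
      linarith
  intro n
  induction n using Nat.strong_induction_on with
  | _ n ih =>
    have hsum : ∑ j ∈ Finset.range n, u j = ∑ j ∈ Finset.range n, v j :=
      Finset.sum_congr rfl fun j hj => ih j (Finset.mem_range.mp hj)
    have h := key n
    rw [Finset.sum_range_succ, Finset.sum_range_succ, hsum] at h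
    have : u n * (1 + μu) = v n * (1 + μu) := by ring_nf; linarith
    have h1 : (0:ℝ) < 1 + μu := by linarith
    exact mul_right_cancel₀ (ne_of_gt h1) this
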